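/- arXiv:0802.0646 — 5 statements merged into one kernel-verified Lean document; each statement's English description precedes it below -/
import Mathlib

section
/- Let X₁,…,Xₙ be Polish spaces with Borel probability measures μ₁,…,μₙ and let B ⊆ X₁ × ⋯ × Xₙ be a Borel set. Suppose that for every ε > 0 there exist Borel sets Bᵢ ⊆ Xᵢ with ∑ᵢ μᵢ(Bᵢ) ≤ ε and B ⊆ ⋃ᵢ p_{Xᵢ}⁻¹[Bᵢ]. Then B is an L-shaped null set: there exist Borel μᵢ-null sets Nᵢ ⊆ Xᵢ with B ⊆ ⋃ᵢ p_{Xᵢ}⁻¹[Nᵢ]. -/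
open MeasureTheory Set
open scoped ENNReal

noncomputable section

theorem lshaped_null {n : ℕ} (X : Fin n → Type*)
    [∀ i, MeasurableSpace (X i)] [∀ i, TopologicalSpace (X i)]
    [∀ i, PolishSpace (X i)] [∀ i, BorelSpace (X i)]
    (μ : ∀ i, Measure (X i)) [∀ i, IsProbabilityMeasure (μ i)]
    (B : Set (∀ i, X i)) (hB : MeasurableSet B)
    (h : ∀ ε : ℝ≥0∞, 0 < ε → ∃ Bi : ∀ i, Set (X i), (∀ i, MeasurableSet (Bi i)) ∧
      (B ⊆ ⋃ i, Function.eval i ⁻¹' Bi i) ∧ ∑ i, μ i (Bi i) ≤ ε) :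
    ∃ Ni : ∀ i, Set (X i), (∀ i, MeasurableSet (Ni i)) ∧ (∀ i, μ i (Ni i) = 0) ∧
      B ⊆ ⋃ i, Function.eval i ⁻¹' Ni i := by
  have H : ∀ k : ℕ, ∃ Bi : ∀ i, Set (X i), (∀ i, MeasurableSet (Bi i)) ∧
      (B ⊆ ⋃ i, Function.eval i ⁻¹' Bi i) ∧ ∑ i, μ i (Bi i) ≤ (1/2) ^ k := by
    intro k
    exact h ((1/2) ^ k) (ENNReal.pow_pos (by norm_num) k)
  choose Bi hmeas hsub hsum using H
  refine ⟨fun i => Filter.limsup (fun k => Bi k i) Filter.atTop, ?_, ?_, ?_⟩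
  · exact fun i => MeasurableSet.measurableSet_limsup (fun k => hmeas k i)
  · intro i
    apply measure_limsup_atTop_eq_zero
    have hle : ∑' k, μ i (Bi k i) ≤ ∑' k : ℕ, ((1/2 : ℝ≥0∞)) ^ k := by
      refine ENNReal.tsum_le_tsum fun k => ?_
      calc μ i (Bi k i) ≤ ∑ j, μ j (Bi k j) :=
            Finset.single_le_sum (f := fun j => μ j (Bi k j)) (fun j _ => zero_le) (Finset.mem_univ i)
        _ ≤ (1/2) ^ k := hsum k
    refine ne_top_of_le_ne_top ?_ hle
    simp [ENNReal.tsum_geometric]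
  · intro x hx
    have hf : ∀ k : ℕ, ∃ i, x i ∈ Bi k i := by
      intro k
      obtain ⟨_, ⟨i, rfl⟩, hi⟩ := hsub k hx
      exact ⟨i, hi⟩
    choose f hfmem using hf
    have : ∃ i, Set.Infinite (f ⁻¹' {i}) := by
      obtain ⟨i, hi⟩ := Finite.exists_infinite_fiber f
      exact ⟨i, Set.infinite_coe_iff.mp hi⟩
    obtain ⟨i, hi⟩ := this
    refine mem_iUnion.2 ⟨i, ?_⟩
    simp only [Function.eval, mem_preimage]
    rw [Filter.mem_limsup_iff_frequently_mem]
    rw [Filter.frequently_atTop]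
    intro m
    obtain ⟨k, hk1, hk2⟩ := hi.exists_gt m
    exact ⟨k, hk2.le, by rw [← show f k = i from hk1]; exact hfmem k⟩
end
end

section
/- Let X, Y be Polish spaces, c : X × Y → [0,∞] Borel measurable, X₀ ⊆ X a nonempty Borel set, and φ : X₀ → ℝ Borel measurable. Then the c-transform ψ : Y → [-∞,∞) defined by ψ(y) = inf_{x ∈ X₀} (c(x,y) − φ(x)) is universally measurable. -/
open MeasureTheory Set
open scoped ENNReal

noncomputable section

def UnivMeasurableSet {α : Type*} [MeasurableSpace α] (S : Set α) : Prop :=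
  ∀ μ : Measure α, SigmaFinite μ → NullMeasurableSet S μ

def UnivMeasurable {α β : Type*} [MeasurableSpace α] [MeasurableSpace β] (f : α → β) : Prop :=
  ∀ B : Set β, MeasurableSet B → UnivMeasurableSet (f ⁻¹' B)

open Filter Topology

private lemma nullMeasurableSet_iff_nms {α : Type*} [MeasurableSpace α] (μ : Measure α)
    (s : Set α) : NullMeasurableSet s μ ↔ MeasurableSet (α := NullMeasurableSpace α μ) s :=
  Iff.rfl

/-- Auxiliary recursion: define a sequence of naturals where the `n`-th value may depend on
all previous values. -/
private noncomputable def seqRec (F : ℕ → (ℕ → ℕ) → ℕ) : ℕ → ℕ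
  | n => F n fun i => if _h : i < n then seqRec F i else 0

private lemma seqRec_eq (F : ℕ → (ℕ → ℕ) → ℕ) (n : ℕ) :
    seqRec F n = F n fun i => if _h : i < n then seqRec F i else 0 := by
  rw [seqRec]

/-- Choquet capacitability argument: an analytic set (image of `ℕ → ℕ`) can be inner
approximated in measure by closed subsets, for a finite measure. -/
private lemma inner_approx {Y : Type*} [MetricSpace Y] [MeasurableSpace Y]
    [OpensMeasurableSpace Y] (μ : Measure Y) [IsFiniteMeasure μ]
    (f : (ℕ → ℕ) → Y) (hf : Continuous f) {ε : ℝ≥0∞} (hε : ε ≠ 0) :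
    ∃ F : Set Y, IsClosed F ∧ F ⊆ range f ∧ μ (range f) ≤ μ F + ε := by
  obtain ⟨δ0, hδ0pos, hδ0sum⟩ := ENNReal.exists_pos_sum_of_countable hε ℕ
  set δ : ℕ → ℝ≥0∞ := fun n => (δ0 n : ℝ≥0∞) with hδdef
  have hδpos : ∀ n, δ n ≠ 0 := fun n => by
    simp only [hδdef, ne_eq, ENNReal.coe_eq_zero]
    exact (hδ0pos n).ne'
  -- one-step choice
  have step : ∀ (T : Set (ℕ → ℕ)) (n : ℕ),
      ∃ m : ℕ, μ (f '' T) ≤ μ (f '' (T ∩ {x | x n ≤ m})) + δ n := by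
    intro T n
    rcases eq_or_ne (μ (f '' T)) 0 with h0 | h0
    · exact ⟨0, by simp [h0]⟩
    have hmono : Monotone fun m : ℕ => f '' (T ∩ {x | x n ≤ m}) := fun a b hab =>
      image_mono (inter_subset_inter_right _ fun x hx => le_trans hx hab)
    have hTU : ⋃ m : ℕ, (T ∩ {x | x n ≤ m}) = T := by
      ext x
      simp only [mem_iUnion, mem_inter_iff, mem_setOf_eq]
      exact ⟨fun ⟨m, hm, _⟩ => hm, fun hx => ⟨x n, hx, le_rfl⟩⟩
    have hU : ⋃ m : ℕ, f '' (T ∩ {x | x n ≤ m}) = f '' T := by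
      rw [← image_iUnion, hTU]
    have hlt2 : μ (f '' T) - δ n < ⨆ m : ℕ, μ (f '' (T ∩ {x | x n ≤ m})) := by
      calc μ (f '' T) - δ n < μ (f '' T) :=
            ENNReal.sub_lt_self (measure_ne_top μ _) h0 (hδpos n)
        _ = ⨆ m : ℕ, μ (f '' (T ∩ {x | x n ≤ m})) := by
            rw [← hU]; exact hmono.measure_iUnion
    obtain ⟨m, hm⟩ := lt_iSup_iff.1 hlt2
    exact ⟨m, tsub_le_iff_right.1 hm.le⟩
  choose G hG using step
  set Fc : ℕ → (ℕ → ℕ) → ℕ := fun n prev => G {x | ∀ i < n, x i ≤ prev i} n with hFc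
  set σ : ℕ → ℕ := seqRec Fc with hσdef
  set L : ℕ → Set (ℕ → ℕ) := fun n => {x | ∀ i < n, x i ≤ σ i} with hL
  have hmask : ∀ n, {x : ℕ → ℕ | ∀ i < n, x i ≤ if _h : i < n then σ i else 0} = L n := by
    intro n
    ext x
    constructor
    · intro h i hi
      have := h i hi
      rwa [dif_pos hi] at this
    · intro h i hi
      rw [dif_pos hi]
      exact h i hi
  have hσeq : ∀ n, σ n = G (L n) n := by
    intro n
    have h1 := seqRec_eq Fc n
    rw [← hσdef] at h1
    simp only [hFc] at h1
    rw [hmask n] at h1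
    exact h1
  have key : ∀ n, μ (f '' L n) ≤ μ (f '' (L n ∩ {x | x n ≤ σ n})) + δ n := by
    intro n
    have := hG (L n) n
    rwa [← hσeq n] at this
  have hLsucc : ∀ n, L (n + 1) = L n ∩ {x | x n ≤ σ n} := by
    intro n
    ext x
    simp only [hL, mem_setOf_eq, mem_inter_iff, Nat.lt_succ_iff]
    constructor
    · intro h
      exact ⟨fun i hi => h i hi.le, h n le_rfl⟩
    · rintro ⟨h1, h2⟩ i hi
      rcases hi.lt_or_eq with h' | h'
      · exact h1 i h'
      · rw [h']; exact h2
  have chain : ∀ n, μ (range f) ≤ μ (f '' L n) + ∑ i ∈ Finset.range n, δ i := by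
    intro n
    induction n with
    | zero =>
        have hL0 : L 0 = univ := by
          ext x; simp [hL]
        rw [hL0, image_univ]
        simp
    | succ n ih =>
        calc μ (range f) ≤ μ (f '' L n) + ∑ i ∈ Finset.range n, δ i := ih
          _ ≤ (μ (f '' (L n ∩ {x | x n ≤ σ n})) + δ n) + ∑ i ∈ Finset.range n, δ i :=
              add_le_add (key n) le_rfl
          _ = μ (f '' L (n + 1)) + ∑ i ∈ Finset.range (n + 1), δ i := by
              rw [← hLsucc n, Finset.sum_range_succ]
              ring
  have hεsum : ∀ n, ∑ i ∈ Finset.range n, δ i ≤ ε := fun n =>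
    le_trans (ENNReal.sum_le_tsum _) hδ0sum.le
  have chain2 : ∀ n, μ (range f) ≤ μ (closure (f '' L n)) + ε := fun n =>
    (chain n).trans (add_le_add (measure_mono subset_closure) (hεsum n))
  refine ⟨⋂ n, closure (f '' L n), isClosed_iInter fun _ => isClosed_closure, ?_, ?_⟩
  · -- the hard inclusion, via an ultrafilter limit argument
    intro y hy
    simp only [mem_iInter] at hy
    have hpt : ∀ n : ℕ, ∃ x, x ∈ L n ∧ dist y (f x) < 1 / (n + 1) := by
      intro n
      rcases Metric.mem_closure_iff.1 (hy n) (1 / (n + 1)) (by positivity) with ⟨b, hb, hdb⟩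
      rcases hb with ⟨x, hxL, rfl⟩
      exact ⟨x, hxL, hdb⟩
    choose x hxL hxd using hpt
    have hne : (map x atTop).NeBot := map_neBot
    set 𝒰 : Ultrafilter (ℕ → ℕ) := Ultrafilter.of (map x atTop) with h𝒰
    have hU_le : (𝒰 : Filter (ℕ → ℕ)) ≤ map x atTop := Ultrafilter.of_le _
    have hcoord : ∀ i : ℕ, {z : ℕ → ℕ | z i ≤ σ i} ∈ 𝒰 := by
      intro i
      apply hU_le
      rw [mem_map]
      refine mem_of_superset (mem_atTop (i + 1)) fun n hn => ?_
      exact hxL n i (lt_of_lt_of_le (Nat.lt_succ_self i) hn)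
    have hpure : ∀ i : ℕ, ∃ a : ℕ, 𝒰.map (fun z => z i) = pure a := by
      intro i
      have hmem : Iic (σ i) ∈ 𝒰.map fun z : ℕ → ℕ => z i := by
        rw [Ultrafilter.mem_map]
        exact hcoord i
      obtain ⟨a, _, hp⟩ := Ultrafilter.eq_pure_of_finite_mem (Set.finite_Iic (σ i)) hmem
      exact ⟨a, hp⟩
    choose a hap using hpure
    have htendsto_a : Tendsto (fun z : ℕ → ℕ => z) 𝒰 (𝓝 a) := by
      rw [tendsto_pi_nhds]
      intro i
      have hmap : Filter.map (fun z : ℕ → ℕ => z i) ↑𝒰 = pure (a i) := by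
        rw [← Ultrafilter.coe_map, hap i, Ultrafilter.coe_pure]
      refine le_trans (le_of_eq hmap) (pure_le_nhds _)
    have h1 : Tendsto f ↑𝒰 (𝓝 (f a)) := (hf.tendsto a).comp htendsto_a
    have h2 : Tendsto f ↑𝒰 (𝓝 y) := by
      have hx_tendsto : Tendsto (fun n => f (x n)) atTop (𝓝 y) := by
        rw [tendsto_iff_dist_tendsto_zero]
        refine squeeze_zero (fun n => dist_nonneg) (fun n => ?_)
          tendsto_one_div_add_atTop_nhds_zero_nat
        rw [dist_comm]
        exact (hxd n).le
      calc Filter.map f ↑𝒰 ≤ Filter.map f (map x atTop) := map_mono hU_le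
        _ = Filter.map (fun n => f (x n)) atTop := map_map
        _ ≤ 𝓝 y := hx_tendsto
    exact ⟨a, tendsto_nhds_unique h1 h2⟩
  · have hanti : Antitone fun n => closure (f '' L n) := by
      intro m n hmn
      refine closure_mono (image_mono fun x hx i hi => hx i (lt_of_lt_of_le hi hmn))
    have him : μ (⋂ n, closure (f '' L n)) = ⨅ n, μ (closure (f '' L n)) :=
      hanti.measure_iInter (fun n => isClosed_closure.measurableSet.nullMeasurableSet)
        ⟨0, measure_ne_top μ _⟩
    calc μ (range f) ≤ ⨅ n, (μ (closure (f '' L n)) + ε) := le_iInf chain2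
      _ = (⨅ n, μ (closure (f '' L n))) + ε := ENNReal.iInf_add.symm
      _ = μ (⋂ n, closure (f '' L n)) + ε := by rw [him]

/-- Analytic sets in a Polish space are universally measurable. -/
theorem MeasureTheory.AnalyticSet.univNullMeasurable {Y : Type*} [TopologicalSpace Y]
    [PolishSpace Y] [MeasurableSpace Y] [BorelSpace Y] {s : Set Y} (hs : AnalyticSet s)
    (μ : Measure Y) [SigmaFinite μ] : NullMeasurableSet s μ := by
  have hfin : ∀ ν : Measure Y, IsFiniteMeasure ν → NullMeasurableSet s ν := by
    intro ν hν
    haveI := hν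
    letI := TopologicalSpace.upgradeIsCompletelyMetrizable Y
    rw [AnalyticSet] at hs
    rcases hs with rfl | ⟨f, hfc, rfl⟩
    · exact MeasurableSet.empty.nullMeasurableSet
    · have happrox : ∀ k : ℕ, ∃ F : Set Y, IsClosed F ∧ F ⊆ range f ∧
          ν (range f) ≤ ν F + ((k : ℝ≥0∞) + 1)⁻¹ := fun k =>
        inner_approx ν f hfc (by simp)
      choose F hFc hFs hFm using happrox
      have hBm : MeasurableSet (⋃ k, F k) := MeasurableSet.iUnion fun k => (hFc k).measurableSet
      have hBs : (⋃ k, F k) ⊆ range f := iUnion_subset hFs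
      have hle : ν (range f) ≤ ν (⋃ k, F k) := by
        refine ENNReal.le_of_forall_pos_le_add fun ε hε _ => ?_
        obtain ⟨k, hk⟩ := ENNReal.exists_inv_nat_lt
          (show ((ε : ℝ≥0∞)) ≠ 0 by exact_mod_cast hε.ne')
        calc ν (range f) ≤ ν (F k) + ((k : ℝ≥0∞) + 1)⁻¹ := hFm k
          _ ≤ ν (⋃ k, F k) + ε := by
              refine add_le_add (measure_mono (subset_iUnion F k)) ?_
              exact le_trans (ENNReal.inv_le_inv.2 le_self_add) hk.le
      have hsub : range f \ (⋃ k, F k) ⊆ toMeasurable ν (range f) \ (⋃ k, F k) :=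
        diff_subset_diff_left (subset_toMeasurable ν _)
      have hnull : ν (toMeasurable ν (range f) \ (⋃ k, F k)) = 0 := by
        rw [measure_diff (hBs.trans (subset_toMeasurable ν _)) hBm.nullMeasurableSet
          (measure_ne_top ν _), measure_toMeasurable]
        exact tsub_eq_zero_of_le hle
      have hrf : range f = (⋃ k, F k) ∪ (range f \ (⋃ k, F k)) := (union_diff_cancel hBs).symm
      rw [hrf]
      exact hBm.nullMeasurableSet.union
        (NullMeasurableSet.of_null (measure_mono_null hsub hnull))
  have hSm : ∀ n, MeasurableSet (spanningSets μ n) := measurableSet_spanningSets μ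
  have keyfin : ∀ n, NullMeasurableSet s (μ.restrict (spanningSets μ n)) := fun n =>
    hfin _ ⟨by rw [Measure.restrict_apply_univ]; exact measure_spanningSets_lt_top μ n⟩
  choose t hts htm hteq using fun n => (keyfin n).exists_measurable_subset_ae_eq
  set D := disjointed (spanningSets μ) with hD
  have hBm : MeasurableSet (⋃ n, t n ∩ D n) :=
    MeasurableSet.iUnion fun n => (htm n).inter (MeasurableSet.disjointed hSm n)
  have hBs : (⋃ n, t n ∩ D n) ⊆ s := iUnion_subset fun n => inter_subset_left.trans (hts n)
  have hcover : s \ (⋃ n, t n ∩ D n) ⊆ ⋃ n, (s \ t n) ∩ D n := by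
    intro y hy
    obtain ⟨n, hn⟩ : ∃ n, y ∈ D n := by
      have : y ∈ ⋃ n, D n := by
        rw [hD, iUnion_disjointed, iUnion_spanningSets]
        exact mem_univ y
      exact mem_iUnion.1 this
    refine mem_iUnion.2 ⟨n, ⟨hy.1, fun ht => hy.2 (mem_iUnion.2 ⟨n, ⟨ht, hn⟩⟩)⟩, hn⟩
  have hnull : μ (s \ ⋃ n, t n ∩ D n) = 0 := by
    refine measure_mono_null hcover (measure_iUnion_null fun n => ?_)
    refine measure_mono_null (inter_subset_inter_right _ (disjointed_subset _ n)) ?_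
    rw [← Measure.restrict_apply' (hSm n)]
    exact (ae_eq_set.1 (hteq n)).2
  have hseq : s = (⋃ n, t n ∩ D n) ∪ (s \ ⋃ n, t n ∩ D n) := (union_diff_cancel hBs).symm
  rw [hseq]
  exact hBm.nullMeasurableSet.union (NullMeasurableSet.of_null hnull)

theorem cTransform_univMeasurable
    {X Y : Type*} [MeasurableSpace X] [TopologicalSpace X] [PolishSpace X] [BorelSpace X]
    [MeasurableSpace Y] [TopologicalSpace Y] [PolishSpace Y] [BorelSpace Y]
    (c : X × Y → ℝ≥0∞) (hc : Measurable c)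
    (X₀ : Set X) (hX₀m : MeasurableSet X₀) (hX₀ : X₀.Nonempty)
    (φ : X₀ → ℝ) (hφ : Measurable φ) :
    UnivMeasurable (fun y : Y => ⨅ x : X₀, ((c ((x : X), y)).toEReal - (φ x : EReal))) := by
  haveI : StandardBorelSpace ↥X₀ := hX₀m.standardBorel
  set ψ : Y → EReal := fun y : Y => ⨅ x : X₀, ((c ((x : X), y)).toEReal - (φ x : EReal))
    with hψ
  have hg : Measurable fun p : ↥X₀ × Y => ((c ((p.1 : X), p.2)).toEReal - (φ p.1 : EReal)) := by
    have h1 : Measurable fun p : ↥X₀ × Y => c ((p.1 : X), p.2) :=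
      hc.comp ((measurable_subtype_coe.comp measurable_fst).prodMk measurable_snd)
    have h2 : Measurable fun p : ↥X₀ × Y => φ p.1 := hφ.comp measurable_fst
    have heq : (fun p : ↥X₀ × Y => ((c ((p.1 : X), p.2)).toEReal - (φ p.1 : EReal)))
        = fun p : ↥X₀ × Y => if c ((p.1 : X), p.2) = ⊤ then (⊤ : EReal)
            else (((c ((p.1 : X), p.2)).toReal - φ p.1 : ℝ) : EReal) := by
      funext p
      rcases eq_or_ne (c ((p.1 : X), p.2)) ⊤ with h | h
      · rw [if_pos h, h]
        show ((⊤ : ℝ≥0∞) : EReal) - (φ p.1 : EReal) = ⊤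
        rw [EReal.coe_ennreal_top, EReal.top_sub_coe]
      · rw [if_neg h]
        have hcoe : ((c ((p.1 : X), p.2) : ℝ≥0∞) : EReal)
            = (((c ((p.1 : X), p.2)).toReal : ℝ) : EReal) := by
          rw [← EReal.toReal_coe_ennreal (x := c ((p.1 : X), p.2))]
          exact (EReal.coe_toReal (by rwa [ne_eq, EReal.coe_ennreal_eq_top_iff])
            (EReal.coe_ennreal_ne_bot _)).symm
        show ((c ((p.1 : X), p.2) : ℝ≥0∞) : EReal) - (φ p.1 : EReal) = _
        rw [hcoe, ← EReal.coe_sub]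
    rw [heq]
    exact Measurable.ite (h1 (measurableSet_singleton ⊤)) measurable_const
      ((h1.ennreal_toReal.sub h2).coe_real_ereal)
  have hIio : ∀ a : EReal, AnalyticSet (ψ ⁻¹' Iio a) := by
    intro a
    have hset : ψ ⁻¹' Iio a = Prod.snd ''
        {p : ↥X₀ × Y | ((c ((p.1 : X), p.2)).toEReal - (φ p.1 : EReal)) < a} := by
      ext y
      simp only [hψ, mem_preimage, mem_Iio, iInf_lt_iff, mem_image, mem_setOf_eq, Prod.exists]
      constructor
      · rintro ⟨x, hx⟩
        exact ⟨x, y, hx, rfl⟩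
      · rintro ⟨x, y', h, rfl⟩
        exact ⟨x, h⟩
    rw [hset]
    exact MeasurableSet.analyticSet_image (hg measurableSet_Iio) measurable_snd
  intro B hB μ hμ
  haveI := hμ
  have hmeas : @Measurable (NullMeasurableSpace Y μ) EReal
      NullMeasurableSpace.instMeasurableSpace _ ψ :=
    measurable_of_Iio (α := EReal) (δ := NullMeasurableSpace Y μ)
      (mδ := NullMeasurableSpace.instMeasurableSpace) (f := ψ)
      (fun a => ((hIio a).univNullMeasurable μ : NullMeasurableSet _ μ))
  exact (hmeas hB : NullMeasurableSet _ μ)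
end
end

section
/- Let X, Y be Polish spaces, c : X × Y → [0,∞] Borel measurable, and Γ ⊆ X × Y a Borel set on which c is finite. Fix (x₀,y₀) ∈ Γ and for n ≥ 1 define φₙ(x; x₁,y₁,…,xₙ,yₙ) = (c(x,yₙ) − c(xₙ,yₙ)) + ∑_{i=0}^{n-1} (c(x_{i+1},yᵢ) − c(xᵢ,yᵢ)). Then the function φ : X → [-∞,∞] given by φ(x) = inf{φₙ(x; x₁,y₁,…,xₙ,yₙ) : n ≥ 1, (xᵢ,yᵢ) ∈ Γ for all i} is universally measurable. -/
open MeasureTheory Set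
open scoped ENNReal

noncomputable section

noncomputable def ruPhi {X Y : Type*} (c : X × Y → ℝ≥0∞) (Γ : Set (X × Y))
    (p₀ : X × Y) (x : X) : EReal :=
  sInf { r : EReal | ∃ (n : ℕ) (g : Fin (n + 1) → X × Y), 1 ≤ n ∧ g 0 = p₀ ∧
    (∀ i, g i ∈ Γ) ∧
    r = ((c (x, (g (Fin.last n)).2)).toEReal - (c (g (Fin.last n))).toEReal) +
      ∑ i : Fin n, ((c ((g i.succ).1, (g i.castSucc).2)).toEReal -
        (c (g i.castSucc)).toEReal) }

open Filter Topology

lemma ereal_add_eq (x y : EReal) : x + y =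
    if x = ⊥ ∨ y = ⊥ then (⊥ : EReal) else if x = ⊤ ∨ y = ⊤ then ⊤
    else ((x.toReal + y.toReal : ℝ) : EReal) := by
  induction x using EReal.rec <;> induction y using EReal.rec <;>
    simp [EReal.bot_add, EReal.add_bot, EReal.top_add_top, EReal.top_add_coe,
      EReal.coe_add_top, ← EReal.coe_add]

lemma ereal_measurable_add : Measurable fun p : EReal × EReal => p.1 + p.2 := by
  have : (fun p : EReal × EReal => p.1 + p.2) = fun p =>
      if p.1 = ⊥ ∨ p.2 = ⊥ then (⊥ : EReal) else if p.1 = ⊤ ∨ p.2 = ⊤ then ⊤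
      else ((p.1.toReal + p.2.toReal : ℝ) : EReal) := by
    funext p; exact ereal_add_eq p.1 p.2
  rw [this]
  refine Measurable.ite ?_ measurable_const (Measurable.ite ?_ measurable_const ?_)
  · exact ((measurable_fst (measurableSet_singleton ⊥)).union
      (measurable_snd (measurableSet_singleton ⊥)))
  · exact ((measurable_fst (measurableSet_singleton ⊤)).union
      (measurable_snd (measurableSet_singleton ⊤)))
  · exact measurable_coe_real_ereal.comp
      ((measurable_fst.ereal_toReal).add (measurable_snd.ereal_toReal))

instance : MeasurableAdd₂ EReal := ⟨ereal_measurable_add⟩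

lemma ru_iInter_closure_subset {α : Type*} [TopologicalSpace α] [PolishSpace α]
    {f : (ℕ → ℕ) → α} (hf : Continuous f) (N : ℕ → ℕ) :
    (⋂ k, closure (f '' {x | ∀ i < k, x i ≤ N i})) ⊆ f '' {x | ∀ i, x i ≤ N i} := by
  letI := TopologicalSpace.upgradeIsCompletelyMetrizable α
  intro y hy
  have hex : ∀ k : ℕ, ∃ x : ℕ → ℕ, (∀ i < k, x i ≤ N i) ∧ dist (f x) y < 1 / ((k : ℝ) + 1) := by
    intro k
    have h1 : y ∈ closure (f '' {x | ∀ i < k, x i ≤ N i}) := mem_iInter.1 hy k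
    have h2 : (0 : ℝ) < 1 / ((k : ℝ) + 1) := by positivity
    rcases Metric.mem_closure_iff.1 h1 _ h2 with ⟨b, ⟨x, hx, rfl⟩, hb⟩
    exact ⟨x, hx, by rwa [dist_comm]⟩
  choose x hx hdist using hex
  set B : ℕ → ℕ := fun i => max (N i) ((Finset.range (i + 1)).sup fun k => x k i) with hB
  have hxB : ∀ k, x k ∈ Set.pi univ fun i => Iic (B i) := by
    intro k i _
    simp only [mem_Iic, hB]
    rcases le_or_gt k i with h | h
    · exact le_max_of_le_right
        (Finset.le_sup (f := fun k => x k i) (Finset.mem_range.2 (Nat.lt_succ_of_le h)))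
    · exact le_max_of_le_left (hx k i h)
  have hP : IsCompact (Set.pi univ fun i => Iic (B i)) :=
    isCompact_univ_pi fun i => (Set.finite_Iic (B i)).isCompact
  obtain ⟨a, -, φ, hφ, ha⟩ := hP.tendsto_subseq hxB
  refine ⟨a, fun i => ?_, ?_⟩
  · have h1 : Tendsto (fun j => x (φ j) i) atTop (𝓝 (a i)) :=
      ((continuous_apply i).tendsto a).comp ha
    refine le_of_tendsto h1 ?_
    filter_upwards [eventually_gt_atTop i] with j hj
    exact hx (φ j) i (hj.trans_le (hφ.le_apply))
  · have h1 : Tendsto (fun j => f (x (φ j))) atTop (𝓝 (f a)) := (hf.tendsto a).comp ha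
    have h2 : Tendsto (fun k => f (x k)) atTop (𝓝 y) := by
      rw [tendsto_iff_dist_tendsto_zero]
      refine squeeze_zero (fun k => dist_nonneg) (fun k => (hdist k).le) ?_
      exact tendsto_one_div_add_atTop_nhds_zero_nat
    exact tendsto_nhds_unique h1 (h2.comp hφ.tendsto_atTop)

lemma ru_sum_half_pow (ε : ℝ≥0∞) : ∀ k, (∑ j ∈ Finset.range k, ε / 2 ^ (j + 1)) + ε / 2 ^ k = ε := by
  intro k
  induction k with
  | zero => simp
  | succ k ih =>
    have hhalf : ε / 2 ^ (k + 1) = ε / 2 ^ k / 2 := by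
      have h2 : ((2 : ℝ≥0∞) ^ k * 2)⁻¹ = ((2 : ℝ≥0∞) ^ k)⁻¹ * 2⁻¹ :=
        ENNReal.mul_inv (Or.inl (by positivity)) (Or.inr (by norm_num))
      rw [pow_succ, div_eq_mul_inv, h2, ← mul_assoc, ← div_eq_mul_inv, ← div_eq_mul_inv]
    rw [Finset.sum_range_succ, add_assoc, hhalf, ENNReal.add_halves, ih]

lemma ru_analytic_exists_isClosed {α : Type*} [TopologicalSpace α] [MeasurableSpace α]
    [PolishSpace α] [BorelSpace α] (μ : Measure α) [IsFiniteMeasure μ]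
    {s : Set α} (hs : AnalyticSet s) {ε : ℝ≥0∞} (hε : ε ≠ 0) :
    ∃ C, IsClosed C ∧ C ⊆ s ∧ μ s ≤ μ C + ε := by
  rw [AnalyticSet] at hs
  rcases hs with rfl | ⟨f, hf, rfl⟩
  · exact ⟨∅, isClosed_empty, Subset.rfl, by simp⟩
  set D : (ℕ → ℕ) → ℕ → Set (ℕ → ℕ) := fun N k => {x | ∀ i < k, x i ≤ N i} with hD
  have hupd : ∀ (N : ℕ → ℕ) (k m : ℕ),
      D (Function.update N k m) (k + 1) = D N k ∩ {x | x k ≤ m} := by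
    intro N k m
    ext z
    simp only [hD, mem_setOf_eq, mem_inter_iff]
    constructor
    · intro h
      refine ⟨fun i hi => ?_, ?_⟩
      · have := h i (hi.trans (Nat.lt_succ_self k))
        rwa [Function.update_of_ne hi.ne] at this
      · have := h k (Nat.lt_succ_self k)
        rwa [Function.update_self] at this
    · rintro ⟨h1, h2⟩ i hi
      rcases Nat.lt_succ_iff_lt_or_eq.1 hi with h | rfl
      · rw [Function.update_of_ne h.ne]; exact h1 i h
      · rwa [Function.update_self]
  -- selection of a bound at each step
  have key : ∀ (N : ℕ → ℕ) (k : ℕ), ∃ m : ℕ,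
      μ (f '' D N k) ≤ μ (f '' D (Function.update N k m) (k + 1)) + ε / 2 ^ (k + 1) := by
    intro N k
    have hmono : Monotone fun m : ℕ => f '' (D N k ∩ {x | x k ≤ m}) := by
      intro m m' hm
      exact image_mono (inter_subset_inter_right _ fun z hz => le_trans hz hm)
    have hU : (⋃ m : ℕ, f '' (D N k ∩ {x | x k ≤ m})) = f '' D N k := by
      have hUU : (⋃ m : ℕ, (D N k ∩ {x | x k ≤ m})) = D N k :=
        Subset.antisymm (iUnion_subset fun m => inter_subset_left)
          (fun z hz => mem_iUnion.2 ⟨z k, hz, mem_setOf_eq ▸ le_rfl⟩)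
      rw [← image_iUnion, hUU]
    have hsup : μ (f '' D N k) = ⨆ m : ℕ, μ (f '' (D N k ∩ {x | x k ≤ m})) := by
      rw [← hU, hmono.measure_iUnion]
    set a := μ (f '' D N k) with ha
    set δ := ε / 2 ^ (k + 1) with hδ
    have hδ0 : δ ≠ 0 := by
      simp only [hδ, ne_eq, ENNReal.div_eq_zero_iff, hε, false_or]
      exact ENNReal.pow_ne_top (by norm_num)
    rcases le_or_gt a δ with h | h
    · exact ⟨0, h.trans (self_le_add_left _ _)⟩
    · have hafin : a ≠ ⊤ := measure_ne_top μ _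
      have ha0 : a ≠ 0 := pos_iff_ne_zero.1 ((zero_le (a := δ)).trans_lt h)
      have hlt : a - δ < a := ENNReal.sub_lt_self hafin ha0 hδ0
      conv at hlt => rw [hsup]
      rcases lt_iSup_iff.1 hlt with ⟨mm, hmm⟩
      refine ⟨mm, ?_⟩
      rw [hupd]
      rw [← hsup] at hmm
      exact (ENNReal.lt_add_of_sub_lt_right (Or.inl hafin) hmm).le
  choose m hm using key
  -- recursive construction
  set Ns : ℕ → ℕ → ℕ := fun k => Nat.rec (motive := fun _ => ℕ → ℕ) (fun _ => 0)
    (fun k Nk => Function.update Nk k (m Nk k)) k with hNs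
  set N : ℕ → ℕ := fun i => Ns (i + 1) i with hN
  have stable : ∀ k i, i < k → Ns k i = N i := by
    intro k
    induction k with
    | zero => intro i hi; exact absurd hi (Nat.not_lt_zero i)
    | succ k ih =>
      intro i hi
      rcases Nat.lt_succ_iff_lt_or_eq.1 hi with h | rfl
      · have h1 : Ns (k + 1) i = Ns k i := Function.update_of_ne h.ne _ _
        rw [h1, ih i h]
      · rfl
  have hDk : ∀ k, D (Ns k) k = D N k := by
    intro k
    ext z
    simp only [hD, mem_setOf_eq]
    exact ⟨fun h i hi => by rw [← stable k i hi]; exact h i hi,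
      fun h i hi => by rw [stable k i hi]; exact h i hi⟩
  have step : ∀ k, μ (f '' D N k) ≤ μ (f '' D N (k + 1)) + ε / 2 ^ (k + 1) := by
    intro k
    have h1 := hm (Ns k) k
    have h2 : Function.update (Ns k) k (m (Ns k) k) = Ns (k + 1) := rfl
    rw [hDk k, h2, hDk (k + 1)] at h1
    exact h1
  have bound : ∀ k, μ (f '' D N 0) ≤ μ (f '' D N k) + ∑ j ∈ Finset.range k, ε / 2 ^ (j + 1) := by
    intro k
    induction k with
    | zero => simp
    | succ k ih =>
      calc μ (f '' D N 0) ≤ μ (f '' D N k) + ∑ j ∈ Finset.range k, ε / 2 ^ (j + 1) := ih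
        _ ≤ (μ (f '' D N (k + 1)) + ε / 2 ^ (k + 1)) + ∑ j ∈ Finset.range k, ε / 2 ^ (j + 1) :=
            add_le_add_left (step k) _
        _ = μ (f '' D N (k + 1)) + ∑ j ∈ Finset.range (k + 1), ε / 2 ^ (j + 1) := by
            rw [Finset.sum_range_succ]; ring
  have hD0 : f '' D N 0 = range f := by
    have : D N 0 = univ := by ext z; simp [hD]
    rw [this, image_univ]
  have boundε : ∀ k, μ (range f) ≤ μ (closure (f '' D N k)) + ε := by
    intro k
    calc μ (range f) = μ (f '' D N 0) := by rw [hD0]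
      _ ≤ μ (f '' D N k) + ∑ j ∈ Finset.range k, ε / 2 ^ (j + 1) := bound k
      _ ≤ μ (closure (f '' D N k)) + ε := by
          refine add_le_add (measure_mono subset_closure) ?_
          calc (∑ j ∈ Finset.range k, ε / 2 ^ (j + 1))
              ≤ (∑ j ∈ Finset.range k, ε / 2 ^ (j + 1)) + ε / 2 ^ k := le_add_right le_rfl
            _ = ε := ru_sum_half_pow ε k
  set Cl : ℕ → Set α := fun k => closure (f '' D N k) with hCl
  have hanti : Antitone Cl := by
    intro k k' hk
    exact closure_mono (image_mono fun z hz i hi => hz i (hi.trans_le hk))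
  have hiInf : μ (⋂ k, Cl k) = ⨅ k, μ (Cl k) :=
    hanti.measure_iInter (fun k => isClosed_closure.measurableSet.nullMeasurableSet)
      ⟨0, measure_ne_top μ _⟩
  have hK : IsCompact {x : ℕ → ℕ | ∀ i, x i ≤ N i} := by
    have : {x : ℕ → ℕ | ∀ i, x i ≤ N i} = Set.pi univ fun i => Iic (N i) := by
      ext z; simp [Set.mem_pi, Pi.le_def]
    rw [this]
    exact isCompact_univ_pi fun i => (Set.finite_Iic (N i)).isCompact
  refine ⟨f '' {x | ∀ i, x i ≤ N i}, (hK.image hf).isClosed, image_subset_range _ _, ?_⟩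
  calc μ (range f) ≤ (⨅ k, μ (Cl k)) + ε := by
        rw [ENNReal.iInf_add]; exact le_iInf fun k => boundε k
    _ = μ (⋂ k, Cl k) + ε := by rw [hiInf]
    _ ≤ μ (f '' {x | ∀ i, x i ≤ N i}) + ε :=
        add_le_add_left (measure_mono (ru_iInter_closure_subset hf N)) _

lemma ru_analytic_nullMeasurable_finite {α : Type*} [TopologicalSpace α] [MeasurableSpace α]
    [PolishSpace α] [BorelSpace α] (μ : Measure α) [IsFiniteMeasure μ]
    {s : Set α} (hs : AnalyticSet s) : NullMeasurableSet s μ := by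
  have hC : ∀ n : ℕ, ∃ C, IsClosed C ∧ C ⊆ s ∧ μ s ≤ μ C + ((n : ℝ≥0∞) + 1)⁻¹ := by
    intro n
    refine ru_analytic_exists_isClosed μ hs (ENNReal.inv_ne_zero.2 (by simp))
  choose C hCcl hCsub hCle using hC
  set T : Set α := ⋃ n, C n with hT
  have hTm : MeasurableSet T := MeasurableSet.iUnion fun n => (hCcl n).measurableSet
  have hTsub : T ⊆ s := iUnion_subset hCsub
  have hle : μ s ≤ μ T := by
    refine ENNReal.le_of_forall_pos_le_add fun ε hε hT' => ?_
    obtain ⟨n, hn⟩ := ENNReal.exists_inv_nat_lt (a := (ε : ℝ≥0∞)) (by simpa using hε.ne')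
    calc μ s ≤ μ (C n) + ((n : ℝ≥0∞) + 1)⁻¹ := hCle n
      _ ≤ μ T + (n : ℝ≥0∞)⁻¹ := by
          refine add_le_add (measure_mono (subset_iUnion C n)) ?_
          exact ENNReal.inv_le_inv.2 (le_add_right le_rfl)
      _ ≤ μ T + ε := add_le_add_right hn.le _
  have heq : μ T = μ s := le_antisymm (measure_mono hTsub) hle
  have hnull : μ (toMeasurable μ s \ T) = 0 := by
    rw [measure_diff (hTsub.trans (subset_toMeasurable μ s)) hTm.nullMeasurableSet
      (measure_ne_top μ T), measure_toMeasurable, heq, tsub_self]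
  have hdiff : s \ T ⊆ toMeasurable μ s \ T :=
    diff_subset_diff_left (subset_toMeasurable μ s)
  have : s = T ∪ (s \ T) := (union_diff_cancel hTsub).symm
  rw [this]
  exact hTm.nullMeasurableSet.union
    (NullMeasurableSet.of_null (measure_mono_null hdiff hnull))

lemma ru_analytic_univMeasurable {α : Type*} [TopologicalSpace α] [MeasurableSpace α]
    [PolishSpace α] [BorelSpace α] {s : Set α} (hs : AnalyticSet s) :
    UnivMeasurableSet s := by
  intro μ hσ
  set E : ℕ → Set α := spanningSets μ with hE
  have hmeas : ∀ n, NullMeasurableSet s (μ.restrict (E n)) := by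
    intro n
    have : IsFiniteMeasure (μ.restrict (E n)) := ⟨by
      rw [Measure.restrict_apply_univ]
      exact measure_spanningSets_lt_top μ n⟩
    exact ru_analytic_nullMeasurable_finite _ hs
  choose T hTsub hTm hTae using fun n => (hmeas n).exists_measurable_subset_ae_eq
  set W : Set α := ⋃ n, T n with hW
  have hWm : MeasurableSet W := MeasurableSet.iUnion hTm
  have hWsub : W ⊆ s := iUnion_subset hTsub
  have hnull : μ (s \ W) = 0 := by
    have hsub : s \ W ⊆ ⋃ n, (s \ T n) ∩ E n := by
      intro z hz
      obtain ⟨n, hn⟩ : ∃ n, z ∈ E n := by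
        have : z ∈ ⋃ n, E n := by rw [hE, iUnion_spanningSets]; trivial
        exact mem_iUnion.1 this
      exact mem_iUnion.2 ⟨n, ⟨hz.1, fun h => hz.2 (mem_iUnion.2 ⟨n, h⟩)⟩, hn⟩
    refine measure_mono_null hsub (measure_iUnion_null fun n => ?_)
    have h0 : μ.restrict (E n) (s \ T n) = 0 := by
      have := (ae_eq_set.1 (hTae n)).2
      simpa using this
    rwa [Measure.restrict_apply' (measurableSet_spanningSets μ n)] at h0
  have : s = W ∪ (s \ W) := (union_diff_cancel hWsub).symm
  rw [this]
  exact hWm.nullMeasurableSet.union (NullMeasurableSet.of_null hnull)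

lemma ereal_measurable_sub {α : Type*} [MeasurableSpace α] {f g : α → EReal}
    (hf : Measurable f) (hg : Measurable g) : Measurable fun x => f x - g x := by
  simp only [sub_eq_add_neg]
  exact hf.add (continuous_neg.measurable.comp hg)

theorem ruPhi_univMeasurable
    {X Y : Type*} [MeasurableSpace X] [TopologicalSpace X] [PolishSpace X] [BorelSpace X]
    [MeasurableSpace Y] [TopologicalSpace Y] [PolishSpace Y] [BorelSpace Y]
    (c : X × Y → ℝ≥0∞) (hc : Measurable c)
    (Γ : Set (X × Y)) (hΓm : MeasurableSet Γ) (hΓfin : ∀ p ∈ Γ, c p < ⊤)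
    (p₀ : X × Y) (hp₀ : p₀ ∈ Γ) :
    UnivMeasurable (ruPhi c Γ p₀) := by
  -- sublevel sets are analytic
  have hIio : ∀ a : EReal, AnalyticSet (ruPhi c Γ p₀ ⁻¹' Iio a) := by
    intro a
    set F : ∀ n : ℕ, X × (Fin (n + 1) → X × Y) → EReal := fun n q =>
      ((c (q.1, (q.2 (Fin.last n)).2)).toEReal - (c (q.2 (Fin.last n))).toEReal) +
        ∑ i : Fin n, ((c ((q.2 i.succ).1, (q.2 i.castSucc).2)).toEReal -
          (c (q.2 i.castSucc)).toEReal) with hF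
    set T : ∀ n : ℕ, Set (X × (Fin (n + 1) → X × Y)) := fun n =>
      {q | 1 ≤ n ∧ q.2 0 = p₀ ∧ (∀ i, q.2 i ∈ Γ) ∧ F n q < a} with hT
    have hFm : ∀ n, Measurable (F n) := by
      intro n
      have hev : ∀ i : Fin (n + 1), Measurable fun q : X × (Fin (n + 1) → X × Y) => q.2 i :=
        fun i => (measurable_pi_apply i).comp measurable_snd
      refine Measurable.add ?_ ?_
      · refine ereal_measurable_sub ?_ ?_
        · exact measurable_coe_ennreal_ereal.comp
            (hc.comp (measurable_fst.prodMk (measurable_snd.comp (hev (Fin.last n)))))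
        · exact measurable_coe_ennreal_ereal.comp (hc.comp (hev (Fin.last n)))
      · refine Finset.measurable_sum Finset.univ fun i _ => ?_
        refine ereal_measurable_sub ?_ ?_
        · exact measurable_coe_ennreal_ereal.comp (hc.comp
            ((measurable_fst.comp (hev i.succ)).prodMk (measurable_snd.comp (hev i.castSucc))))
        · exact measurable_coe_ennreal_ereal.comp (hc.comp (hev i.castSucc))
    have hTm : ∀ n, MeasurableSet (T n) := by
      intro n
      have hTeq : T n = {q : X × (Fin (n + 1) → X × Y) | 1 ≤ n} ∩
          (((fun q : X × (Fin (n + 1) → X × Y) => q.2 0) ⁻¹' {p₀}) ∩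
            ((⋂ i, (fun q : X × (Fin (n + 1) → X × Y) => q.2 i) ⁻¹' Γ) ∩
              (F n ⁻¹' Iio a))) := by
        ext q
        simp only [hT, mem_setOf_eq, mem_inter_iff, mem_preimage, mem_singleton_iff,
          mem_iInter, mem_Iio, and_assoc]
      rw [hTeq]
      refine (MeasurableSet.const _).inter (MeasurableSet.inter ?_ (MeasurableSet.inter ?_ ?_))
      · exact ((measurable_pi_apply 0).comp measurable_snd) (measurableSet_singleton p₀)
      · exact MeasurableSet.iInter fun i =>
          ((measurable_pi_apply i).comp measurable_snd) hΓm
      · exact (hFm n) measurableSet_Iio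
    have hunion : ruPhi c Γ p₀ ⁻¹' Iio a = ⋃ n : ℕ, Prod.fst '' T n := by
      ext x
      simp only [mem_preimage, mem_Iio, ruPhi, mem_iUnion]
      rw [sInf_lt_iff]
      constructor
      · rintro ⟨r, ⟨n, g, hn, hg0, hgΓ, rfl⟩, hr⟩
        exact ⟨n, ⟨(x, g), ⟨hn, hg0, hgΓ, hr⟩, rfl⟩⟩
      · rintro ⟨n, ⟨q, ⟨hn, hg0, hgΓ, hr⟩, rfl⟩⟩
        exact ⟨F n q, ⟨n, q.2, hn, hg0, hgΓ, rfl⟩, hr⟩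
    rw [hunion]
    exact AnalyticSet.iUnion fun n =>
      ((hTm n).analyticSet).image_of_continuous continuous_fst
  -- conclude
  intro B hB μ hσ
  have hφ : NullMeasurable (ruPhi c Γ p₀) μ := by
    refine measurable_of_Iio fun a => ?_
    exact ru_analytic_univMeasurable (hIio a) μ hσ
  exact hφ hB
end
end

section
/- Let X, Y be Polish spaces with Borel probability measures μ, ν and c : X × Y → [0,∞] Borel measurable. Suppose π₀ ∈ Π(μ,ν) has I_c[π₀] < ∞ and is strongly c-monotone, i.e. there are Borel functions φ : X → [-∞,∞), ψ : Y → [-∞,∞) with φ(x) + ψ(y) ≤ c(x,y) everywhere and φ(x) + ψ(y) = c(x,y) for π₀-a.e. (x,y). Then π₀ is optimal: I_c[π₀] ≤ I_c[π₁] for every π₁ ∈ Π(μ,ν). -/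
open MeasureTheory Set
open scoped ENNReal

noncomputable section

def IsCoupling {X Y : Type*} [MeasurableSpace X] [MeasurableSpace Y]
    (μ : Measure X) (ν : Measure Y) (π : Measure (X × Y)) : Prop :=
  π.map Prod.fst = μ ∧ π.map Prod.snd = ν

def CMonotoneSet {X Y : Type*} (c : X × Y → ℝ≥0∞) (Γ : Set (X × Y)) : Prop :=
  ∀ (n : ℕ) (f : Fin (n + 1) → X × Y), (∀ i, f i ∈ Γ) →
    ∑ i, c (f i) ≤ ∑ i, c ((f i).1, (f (i + 1)).2)

open Filter Topology

namespace SCMAux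

/-- truncation of an extended real to `[-n, n]`, as a real number -/
noncomputable def Tn (n : ℕ) (a : EReal) : ℝ :=
  ((a ⊓ ((n : ℝ) : EReal)) ⊔ (((-n : ℝ) : ℝ) : EReal)).toReal

lemma Tn_bot (n : ℕ) : Tn n ⊥ = -n := by
  simp [Tn]
  exact_mod_cast EReal.toReal_coe (n : ℝ)

lemma Tn_coe (n : ℕ) (r : ℝ) : Tn n (r : EReal) = max (min r n) (-(n : ℝ)) := by
  have h1 : ((r : EReal) ⊓ ((n : ℝ) : EReal)) = ((min r n : ℝ) : EReal) :=
    (EReal.coe_strictMono.monotone.map_min).symm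
  have h2 : (((min r n : ℝ) : EReal) ⊔ (((-n : ℝ) : ℝ) : EReal))
      = ((max (min r n) (-(n:ℝ)) : ℝ) : EReal) :=
    (EReal.coe_strictMono.monotone.map_max).symm
  unfold Tn
  rw [h1, h2, EReal.toReal_coe]

lemma Tn_top (n : ℕ) : Tn n ⊤ = n := by
  unfold Tn
  rw [top_inf_eq, sup_eq_left.mpr (EReal.coe_le_coe_iff.mpr
    (by linarith [Nat.cast_nonneg (α := ℝ) n] : (-(n:ℝ):ℝ) ≤ (n:ℝ))), EReal.toReal_coe]

lemma Tn_le (n : ℕ) (a : EReal) : Tn n a ≤ n := by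
  induction a using EReal.rec with
  | bot => rw [Tn_bot]; linarith [Nat.cast_nonneg (α := ℝ) n]
  | coe r =>
      rw [Tn_coe]
      exact max_le (min_le_right _ _) (by linarith [Nat.cast_nonneg (α := ℝ) n])
  | top => rw [Tn_top]

lemma neg_le_Tn (n : ℕ) (a : EReal) : -(n : ℝ) ≤ Tn n a := by
  induction a using EReal.rec with
  | bot => rw [Tn_bot]
  | coe r => rw [Tn_coe]; exact le_max_right _ _
  | top => rw [Tn_top]; linarith [Nat.cast_nonneg (α := ℝ) n]

lemma real_key (n r s : ℝ) (hn : 0 ≤ n) :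
    max (min r n) (-n) + max (min s n) (-n) ≤ max (r + s) 0 := by
  rcases le_total r n with h1 | h1 <;> rcases le_total s n with h2 | h2 <;>
    rcases le_total r (-n) with h3 | h3 <;> rcases le_total s (-n) with h4 | h4 <;>
      rcases le_total (r + s) 0 with h5 | h5 <;>
        simp only [max_def, min_def] <;> split_ifs <;> linarith

lemma real_nonneg (n r s : ℝ) (hn : 0 ≤ n) (h : 0 ≤ r + s) :
    0 ≤ max (min r n) (-n) + max (min s n) (-n) := by
  rcases le_total r n with h1 | h1 <;> rcases le_total s n with h2 | h2 <;>
    rcases le_total r (-n) with h3 | h3 <;> rcases le_total s (-n) with h4 | h4 <;>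
      simp only [max_def, min_def] <;> split_ifs <;> linarith

lemma keyA (n : ℕ) (a b : EReal) (ha : a ≠ ⊤) (hb : b ≠ ⊤) :
    ((Tn n a + Tn n b : ℝ) : EReal) ≤ max (a + b) 0 := by
  have hn : (0:ℝ) ≤ n := Nat.cast_nonneg n
  induction a using EReal.rec with
  | top => exact absurd rfl ha
  | bot =>
      induction b using EReal.rec with
      | top => exact absurd rfl hb
      | bot =>
          have : (⊥ : EReal) + ⊥ = ⊥ := by simp
          rw [this, max_eq_right bot_le, Tn_bot]
          have : (-(n:ℝ)) + (-(n:ℝ)) ≤ (0:ℝ) := by linarith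
          exact_mod_cast EReal.coe_le_coe_iff.mpr this
      | coe s =>
          have hbs : (⊥ : EReal) + (s : EReal) = ⊥ := by simp
          rw [hbs, max_eq_right bot_le, Tn_bot]
          have : (-(n:ℝ)) + Tn n (s : EReal) ≤ (0:ℝ) := by
            have := Tn_le n (s : EReal); linarith
          exact_mod_cast EReal.coe_le_coe_iff.mpr this
  | coe r =>
      induction b using EReal.rec with
      | top => exact absurd rfl hb
      | bot =>
          have hbs : (r : EReal) + (⊥ : EReal) = ⊥ := by simp
          rw [hbs, max_eq_right bot_le, Tn_bot]
          have : Tn n (r : EReal) + (-(n:ℝ)) ≤ (0:ℝ) := by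
            have := Tn_le n (r : EReal); linarith
          exact_mod_cast EReal.coe_le_coe_iff.mpr this
      | coe s =>
          have hco : (r : EReal) + (s : EReal) = ((r + s : ℝ) : EReal) := by
            exact_mod_cast rfl
          have hmax : max ((r:EReal) + s) 0 = ((max (r + s) 0 : ℝ) : EReal) := by
            rw [hco]
            exact_mod_cast (EReal.coe_strictMono.monotone.map_max).symm
          rw [hmax, Tn_coe, Tn_coe]
          exact EReal.coe_le_coe_iff.mpr (real_key n r s hn)

lemma keyB (n : ℕ) (a b : EReal) (ha : a ≠ ⊤) (hb : b ≠ ⊤) (h : (0 : EReal) ≤ a + b) :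
    (0 : ℝ) ≤ Tn n a + Tn n b := by
  have hn : (0:ℝ) ≤ n := Nat.cast_nonneg n
  have hab : a ≠ ⊥ := by
    intro hbot
    rw [hbot] at h
    simp at h
  have hbb : b ≠ ⊥ := by
    intro hbot
    rw [hbot] at h
    simp at h
  lift a to ℝ using ⟨ha, hab⟩
  lift b to ℝ using ⟨hb, hbb⟩
  have : (0 : ℝ) ≤ a + b := by exact_mod_cast h
  rw [Tn_coe, Tn_coe]
  exact real_nonneg n a b hn this

lemma Tn_tendsto (r s : ℝ) :
    Tendsto (fun n : ℕ => Tn n (r : EReal) + Tn n (s : EReal)) atTop (𝓝 (r + s)) := by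
  apply Tendsto.congr' _ tendsto_const_nhds
  filter_upwards [eventually_ge_atTop (⌈max |r| |s|⌉₊ : ℕ)] with n hn
  have hn' : max |r| |s| ≤ (n : ℝ) := le_trans (Nat.le_ceil _) (by exact_mod_cast hn)
  have hr : |r| ≤ (n : ℝ) := le_trans (le_max_left _ _) hn'
  have hs : |s| ≤ (n : ℝ) := le_trans (le_max_right _ _) hn'
  rw [Tn_coe, Tn_coe]
  rw [min_eq_left (le_trans (le_abs_self r) hr),
    max_eq_left (le_trans (neg_le_neg hr) (neg_abs_le r)),
    min_eq_left (le_trans (le_abs_self s) hs),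
    max_eq_left (le_trans (neg_le_neg hs) (neg_abs_le s))]

lemma Tn_measurable {α : Type*} [MeasurableSpace α] {f : α → EReal} (hf : Measurable f)
    (n : ℕ) : Measurable fun x => Tn n (f x) :=
  (((hf.min measurable_const).max measurable_const)).ereal_toReal

lemma bounded_integrable {α : Type*} [MeasurableSpace α] (ρ : MeasureTheory.Measure α)
    [MeasureTheory.IsProbabilityMeasure ρ] (f : α → ℝ) (hf : Measurable f) (C : ℝ)
    (hC : ∀ x, |f x| ≤ C) : MeasureTheory.Integrable f ρ :=
  (MeasureTheory.integrable_const C).mono' hf.aestronglyMeasurable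
    (Filter.Eventually.of_forall fun x => by simpa using hC x)

end SCMAux

open SCMAux

theorem stronglyCMonotone_implies_optimal
    {X Y : Type*} [MeasurableSpace X] [TopologicalSpace X] [PolishSpace X] [BorelSpace X]
    [MeasurableSpace Y] [TopologicalSpace Y] [PolishSpace Y] [BorelSpace Y]
    (μ : Measure X) (ν : Measure Y) [IsProbabilityMeasure μ] [IsProbabilityMeasure ν]
    (c : X × Y → ℝ≥0∞) (hc : Measurable c)
    (π₀ : Measure (X × Y)) (hπ₀ : IsCoupling μ ν π₀) (hfin : ∫⁻ p, c p ∂π₀ ≠ ⊤)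
    (φ : X → EReal) (ψ : Y → EReal) (hφ : Measurable φ) (hψ : Measurable ψ)
    (hφtop : ∀ x, φ x ≠ ⊤) (hψtop : ∀ y, ψ y ≠ ⊤)
    (hle : ∀ x y, φ x + ψ y ≤ (c (x, y)).toEReal)
    (heq : ∀ᵐ p ∂π₀, φ p.1 + ψ p.2 = (c p).toEReal) :
    ∀ π₁ : Measure (X × Y), IsCoupling μ ν π₁ →
      ∫⁻ p, c p ∂π₀ ≤ ∫⁻ p, c p ∂π₁ := by
  intro π₁ hπ₁
  by_cases htop : ∫⁻ p, c p ∂π₁ = ⊤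
  · rw [htop]; exact le_top
  -- couplings of probability measures are probability measures
  have hprob : ∀ π : Measure (X × Y), IsCoupling μ ν π → IsProbabilityMeasure π := by
    intro π hπ
    constructor
    have : π.map Prod.fst Set.univ = μ Set.univ := by rw [hπ.1]
    rw [Measure.map_apply measurable_fst MeasurableSet.univ] at this
    simpa using this
  haveI := hprob π₀ hπ₀
  haveI := hprob π₁ hπ₁
  -- truncated potentials
  set F : ℕ → X → ℝ := fun n x => Tn n (φ x) with hF
  set G : ℕ → Y → ℝ := fun n y => Tn n (ψ y) with hG
  set H : ℕ → X × Y → ℝ := fun n p => F n p.1 + G n p.2 with hH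
  have hFm : ∀ n, Measurable (F n) := fun n => Tn_measurable hφ n
  have hGm : ∀ n, Measurable (G n) := fun n => Tn_measurable hψ n
  have hHm : ∀ n, Measurable (H n) := fun n =>
    ((hFm n).comp measurable_fst).add ((hGm n).comp measurable_snd)
  -- boundedness and integrability
  have habs : ∀ (n : ℕ) (a : EReal), |Tn n a| ≤ n := fun n a =>
    abs_le.mpr ⟨neg_le_Tn n a, Tn_le n a⟩
  have hFint : ∀ n, Integrable (F n) μ := fun n =>
    bounded_integrable μ (F n) (hFm n) n (fun x => habs n (φ x))
  have hGint : ∀ n, Integrable (G n) ν := fun n =>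
    bounded_integrable ν (G n) (hGm n) n (fun y => habs n (ψ y))
  have hHint : ∀ (n) (π : Measure (X × Y)) [IsProbabilityMeasure π], Integrable (H n) π := by
    intro n π _
    refine bounded_integrable π (H n) (hHm n) (2 * n) fun p => ?_
    calc |F n p.1 + G n p.2| ≤ |F n p.1| + |G n p.2| := abs_add_le _ _
    _ ≤ (n : ℝ) + n := add_le_add (habs n (φ p.1)) (habs n (ψ p.2))
    _ = 2 * n := by ring
  -- the integral of H n depends only on the marginals
  have hmarg : ∀ (π : Measure (X × Y)), IsCoupling μ ν π → ∀ n,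
      ∫ p, H n p ∂π = ∫ x, F n x ∂μ + ∫ y, G n y ∂ν := by
    intro π hπ n
    haveI := hprob π hπ
    have h1 : ∫ p, F n p.1 ∂π = ∫ x, F n x ∂μ := by
      rw [← hπ.1, integral_map measurable_fst.aemeasurable (hFm n).aestronglyMeasurable]
    have h2 : ∫ p, G n p.2 ∂π = ∫ y, G n y ∂ν := by
      rw [← hπ.2, integral_map measurable_snd.aemeasurable (hGm n).aestronglyMeasurable]
    rw [← h1, ← h2]
    exact integral_add
      (bounded_integrable π (fun p => F n p.1) ((hFm n).comp measurable_fst) n fun p => habs n (φ p.1))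
      (bounded_integrable π (fun p => G n p.2) ((hGm n).comp measurable_snd) n fun p => habs n (ψ p.2))
  -- bound on the π₁ side
  have hb1 : ∀ n, ∫ p, H n p ∂π₁ ≤ (∫⁻ p, c p ∂π₁).toReal := by
    intro n
    have hptle : ∀ p : X × Y, H n p ≤ (min (c p) ((2 * n : ℕ) : ℝ≥0∞)).toReal := by
      intro p
      rcases le_total (c p) ((2 * n : ℕ) : ℝ≥0∞) with h | h
      · rw [min_eq_left h]
        have hcne : c p ≠ ⊤ := ne_top_of_le_ne_top (ENNReal.natCast_ne_top _) h
        have h1 : ((H n p : ℝ) : EReal) ≤ max (φ p.1 + ψ p.2) 0 :=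
          keyA n (φ p.1) (ψ p.2) (hφtop p.1) (hψtop p.2)
        have h2 : max (φ p.1 + ψ p.2) 0 ≤ ((c p).toEReal) := by
          refine max_le (hle p.1 p.2) (EReal.coe_ennreal_nonneg _)
        have h3 : ((c p).toEReal) = (((c p).toReal : ℝ) : EReal) := by
          rw [← EReal.coe_toReal (x := ((c p) : EReal)) (by simpa using hcne)
            (EReal.coe_ennreal_ne_bot _), EReal.toReal_coe_ennreal]
        rw [h3] at h2
        exact EReal.coe_le_coe_iff.mp (le_trans h1 h2)
      · rw [min_eq_right h, ENNReal.toReal_natCast _]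
        calc H n p ≤ (n : ℝ) + n := add_le_add (Tn_le n (φ p.1)) (Tn_le n (ψ p.2))
        _ = ((2 * n : ℕ) : ℝ) := by push_cast; ring
    have hminlt : ∀ᵐ p ∂π₁, min (c p) ((2 * n : ℕ) : ℝ≥0∞) < ⊤ :=
      Filter.Eventually.of_forall fun p =>
        lt_of_le_of_lt (min_le_right _ _) (ENNReal.natCast_lt_top _)
    have hminm : Measurable fun p => min (c p) ((2 * n : ℕ) : ℝ≥0∞) :=
      hc.min measurable_const
    have hminint : Integrable (fun p => (min (c p) ((2 * n : ℕ) : ℝ≥0∞)).toReal) π₁ := by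
      apply integrable_toReal_of_lintegral_ne_top hminm.aemeasurable
      exact ne_top_of_le_ne_top htop (lintegral_mono fun p => min_le_left _ _)
    calc ∫ p, H n p ∂π₁ ≤ ∫ p, (min (c p) ((2 * n : ℕ) : ℝ≥0∞)).toReal ∂π₁ :=
          integral_mono (hHint n π₁) hminint hptle
    _ = (∫⁻ p, min (c p) ((2 * n : ℕ) : ℝ≥0∞) ∂π₁).toReal :=
          integral_toReal hminm.aemeasurable hminlt
    _ ≤ (∫⁻ p, c p ∂π₁).toReal :=
          ENNReal.toReal_mono htop (lintegral_mono fun p => min_le_left _ _)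
  -- a.e. properties on the π₀ side
  have hctop : ∀ᵐ p ∂π₀, c p ≠ ⊤ := by
    filter_upwards [ae_lt_top hc hfin] with p hp using hp.ne
  have hae : ∀ᵐ p ∂π₀,
      (∀ n, |H n p| ≤ (c p).toReal) ∧
        Tendsto (fun n => H n p) atTop (𝓝 ((c p).toReal)) := by
    filter_upwards [heq, hctop] with p hp1 hp2
    have hφb : φ p.1 ≠ ⊥ := by
      intro hbot
      rw [hbot] at hp1
      simp only [EReal.bot_add] at hp1
      exact EReal.coe_ennreal_ne_bot _ hp1.symm
    have hψb : ψ p.2 ≠ ⊥ := by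
      intro hbot
      rw [hbot] at hp1
      simp only [EReal.add_bot] at hp1
      exact EReal.coe_ennreal_ne_bot _ hp1.symm
    set r := (φ p.1).toReal with hr
    set s := (ψ p.2).toReal with hs
    have hφr : φ p.1 = (r : EReal) := (EReal.coe_toReal (hφtop p.1) hφb).symm
    have hψs : ψ p.2 = (s : EReal) := (EReal.coe_toReal (hψtop p.2) hψb).symm
    have hcco : ((c p).toEReal) = (((c p).toReal : ℝ) : EReal) := by
      rw [← EReal.coe_toReal (x := ((c p) : EReal)) (by simpa using hp2)
        (EReal.coe_ennreal_ne_bot _), EReal.toReal_coe_ennreal]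
    have hrs : r + s = (c p).toReal := by
      have : ((r + s : ℝ) : EReal) = (((c p).toReal : ℝ) : EReal) := by
        rw [← hcco, ← hp1, hφr, hψs]; exact_mod_cast rfl
      exact_mod_cast this
    constructor
    · intro n
      have hnonneg : (0 : ℝ) ≤ H n p := by
        apply keyB n (φ p.1) (ψ p.2) (hφtop p.1) (hψtop p.2)
        rw [hp1]
        exact EReal.coe_ennreal_nonneg _
      have h1 : ((H n p : ℝ) : EReal) ≤ max (φ p.1 + ψ p.2) 0 :=
        keyA n (φ p.1) (ψ p.2) (hφtop p.1) (hψtop p.2)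
      have h2 : max (φ p.1 + ψ p.2) 0 = (((c p).toReal : ℝ) : EReal) := by
        rw [hp1, max_eq_left (EReal.coe_ennreal_nonneg _), hcco]
      rw [h2] at h1
      have := EReal.coe_le_coe_iff.mp h1
      rwa [abs_of_nonneg hnonneg]
    · have : (fun n => H n p) = fun n : ℕ => Tn n (r : EReal) + Tn n (s : EReal) := by
        funext n
        simp only [hH, hF, hG, hφr, hψs]
      rw [this, ← hrs]
      exact Tn_tendsto r s
  -- dominated convergence on the π₀ side
  have hbound_int : Integrable (fun p => (c p).toReal) π₀ :=
    integrable_toReal_of_lintegral_ne_top hc.aemeasurable hfin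
  have htend : Tendsto (fun n => ∫ p, H n p ∂π₀) atTop (𝓝 (∫ p, (c p).toReal ∂π₀)) := by
    apply tendsto_integral_of_dominated_convergence (fun p => (c p).toReal)
      (fun n => (hHm n).aestronglyMeasurable) hbound_int
    · intro n
      filter_upwards [hae] with p hp using hp.1 n
    · filter_upwards [hae] with p hp using hp.2
  have hIeq : ∫ p, (c p).toReal ∂π₀ = (∫⁻ p, c p ∂π₀).toReal :=
    integral_toReal hc.aemeasurable (ae_lt_top hc hfin)
  have hfinal : (∫⁻ p, c p ∂π₀).toReal ≤ (∫⁻ p, c p ∂π₁).toReal := by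
    rw [← hIeq]
    refine le_of_tendsto htend (Filter.Eventually.of_forall fun n => ?_)
    calc ∫ p, H n p ∂π₀ = ∫ x, F n x ∂μ + ∫ y, G n y ∂ν := hmarg π₀ hπ₀ n
    _ = ∫ p, H n p ∂π₁ := (hmarg π₁ hπ₁ n).symm
    _ ≤ (∫⁻ p, c p ∂π₁).toReal := hb1 n
  exact (ENNReal.toReal_le_toReal hfin htop).mp hfinal
end
end

section
/- Let X = Y = [0,1] with Lebesgue measure μ = ν = λ, and let c(x,y) = 1 − √(x−y) for y ≤ x and c(x,y) = ∞ for y > x. Then the pushforward π of λ under x ↦ (x,x) (Lebesgue measure on the diagonal) is the unique transport plan in Π(λ,λ) with finite cost, but π is not strongly c-monotone: there exist no Borel functions φ, ψ : [0,1] → [-∞,∞) with φ(x) + ψ(y) ≤ c(x,y) everywhere and φ(x) + ψ(x) = 1 for λ-a.e. x. -/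
open MeasureTheory Set
open scoped ENNReal

noncomputable section

noncomputable def exCost (p : ℝ × ℝ) : ℝ≥0∞ :=
  if p.2 ≤ p.1 then ENNReal.ofReal (1 - Real.sqrt (p.1 - p.2)) else ⊤

lemma exCost_meas : Measurable exCost := by
  unfold exCost
  exact Measurable.ite (measurableSet_le measurable_snd measurable_fst)
    ((ENNReal.measurable_ofReal).comp ((measurable_const.sub
      ((Real.continuous_sqrt.measurable).comp (measurable_fst.sub measurable_snd)))))
    measurable_const

lemma exCost_diag (x : ℝ) : exCost (x, x) = 1 := by
  simp [exCost, ENNReal.ofReal_one]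

/-- Key potential estimate: the decay of φ along points where equality holds. -/
lemma aux_key (φ ψ : ℝ → EReal) (hφ : ∀ x, φ x ≠ ⊤) (hψ : ∀ y, ψ y ≠ ⊤)
    (hle : ∀ x ∈ Icc (0 : ℝ) 1, ∀ y ∈ Icc (0 : ℝ) 1,
      φ x + ψ y ≤ (exCost (x, y)).toEReal)
    (x x' : ℝ) (hx : x ∈ Icc (0:ℝ) 1) (hx' : x' ∈ Icc (0:ℝ) 1)
    (hxe : φ x + ψ x = 1) (hx'e : φ x' + ψ x' = 1) (hlt : x < x') :
    Real.sqrt (x' - x) ≤ (φ x).toReal - (φ x').toReal := by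
  have hφxb : φ x ≠ ⊥ := by
    intro h; rw [h, EReal.bot_add] at hxe
    exact (EReal.coe_ne_bot 1) (by rw [EReal.coe_one]; exact hxe.symm)
  have hψxb : ψ x ≠ ⊥ := by
    intro h; rw [h, EReal.add_bot] at hxe
    exact (EReal.coe_ne_bot 1) (by rw [EReal.coe_one]; exact hxe.symm)
  have hφx'b : φ x' ≠ ⊥ := by
    intro h; rw [h, EReal.bot_add] at hx'e
    exact (EReal.coe_ne_bot 1) (by rw [EReal.coe_one]; exact hx'e.symm)
  set a := (φ x).toReal
  set b := (ψ x).toReal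
  set a' := (φ x').toReal
  have ha : φ x = (a : EReal) := (EReal.coe_toReal (hφ x) hφxb).symm
  have hb : ψ x = (b : EReal) := (EReal.coe_toReal (hψ x) hψxb).symm
  have ha' : φ x' = (a' : EReal) := (EReal.coe_toReal (hφ x') hφx'b).symm
  have hab : a + b = 1 := by
    have := hxe
    rw [ha, hb, ← EReal.coe_add] at this
    exact_mod_cast this
  have hsle : Real.sqrt (x' - x) ≤ 1 := by
    rw [show (1:ℝ) = Real.sqrt 1 by simp]
    apply Real.sqrt_le_sqrt
    have := hx.1; have := hx'.2; linarith
  have hr : (0:ℝ) ≤ 1 - Real.sqrt (x' - x) := by linarith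
  have hineq := hle x' hx' x hx
  rw [ha', hb] at hineq
  have hcost : (exCost (x', x)).toEReal = ((1 - Real.sqrt (x' - x) : ℝ) : EReal) := by
    rw [show exCost (x', x) = ENNReal.ofReal (1 - Real.sqrt (x' - x)) by
      simp only [exCost, if_pos (le_of_lt hlt)]]
    rw [EReal.coe_ennreal_ofReal, max_eq_left hr]
  rw [hcost, ← EReal.coe_add] at hineq
  have : a' + b ≤ 1 - Real.sqrt (x' - x) := by exact_mod_cast hineq
  linarith

/-- Density: any open subinterval of [0,1] meets a conull set. -/
lemma aux_dense (Δ : Set ℝ) (B : Set ℝ) (hB : volume (B ∩ Icc (0:ℝ) 1) = 0)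
    (hΔ : ∀ x, x ∈ Icc (0:ℝ) 1 → x ∉ B → x ∈ Δ)
    (l r : ℝ) (hlr : l < r) (hsub : Ioo l r ⊆ Icc (0:ℝ) 1) :
    (Ioo l r ∩ Δ).Nonempty := by
  have h1 : Ioo l r \ (B ∩ Icc (0:ℝ) 1) ⊆ Ioo l r ∩ Δ := by
    rintro y ⟨hy1, hy2⟩
    exact ⟨hy1, hΔ y (hsub hy1) (fun hyB => hy2 ⟨hyB, hsub hy1⟩)⟩
  have h2 : volume (Ioo l r \ (B ∩ Icc (0:ℝ) 1)) = volume (Ioo l r) :=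
    measure_diff_null hB
  have h3 : volume (Ioo l r ∩ Δ) ≠ 0 := by
    intro h0
    have := measure_mono (μ := volume) h1
    rw [h2, h0, Real.volume_Ioo] at this
    simp only [nonpos_iff_eq_zero, ENNReal.ofReal_eq_zero] at this
    linarith
  exact nonempty_of_measure_ne_zero h3

/-- The combinatorial contradiction. -/
lemma aux_false (Δ : Set ℝ) (f : ℝ → ℝ)
    (hne : ∀ l r : ℝ, 0 ≤ l → l < r → r ≤ 1 → (Ioo l r ∩ Δ).Nonempty)
    (hkey : ∀ x ∈ Δ, ∀ x' ∈ Δ, x < x' → Real.sqrt (x' - x) ≤ f x - f x') :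
    False := by
  obtain ⟨a, ha⟩ := hne 0 (1/2) le_rfl (by norm_num) (by norm_num)
  obtain ⟨b, hb⟩ := hne (1/2) 1 (by norm_num) (by norm_num) le_rfl
  have hab : a < b := lt_trans ha.1.2 hb.1.1
  have ha0 : 0 < a := ha.1.1
  have hb1 : b < 1 := hb.1.2
  set D := f a - f b with hD
  obtain ⟨n, hn⟩ := exists_nat_gt (2 * D ^ 2 / (b - a))
  have hba : 0 < b - a := by linarith
  have hq : 2 * D ^ 2 < (n : ℝ) * (b - a) := by
    rw [div_lt_iff₀ hba] at hn; linarith [hn]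
  have hn0 : 0 < n := by
    by_contra hc
    push_neg at hc
    interval_cases n
    simp at hq
    nlinarith [sq_nonneg D]
  have hnR : (0:ℝ) < n := by exact_mod_cast hn0
  set h := (b - a) / n with hh
  have hhpos : 0 < h := div_pos hba hnR
  have hnh : (n : ℝ) * h = b - a := by rw [hh]; field_simp [hnR.ne']
  have hch : ∀ i : ℕ, ∃ y, (1 ≤ i ∧ i < n) →
      y ∈ Ioo (a + i * h) (a + i * h + h / 2) ∩ Δ := by
    intro i
    by_cases hi : 1 ≤ i ∧ i < n
    · have hiR : (i : ℝ) ≤ (n : ℝ) - 1 := by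
        have : (i : ℝ) + 1 ≤ n := by exact_mod_cast hi.2
        linarith
      have hub : a + i * h + h / 2 ≤ 1 := by
        have : a + (i:ℝ) * h + h / 2 ≤ a + ((n:ℝ) - 1) * h + h / 2 := by nlinarith
        nlinarith
      obtain ⟨y, hy⟩ := hne (a + i * h) (a + i * h + h / 2)
        (by positivity) (by linarith) hub
      exact ⟨y, fun _ => hy⟩
    · exact ⟨0, fun hc => absurd hc hi⟩
  choose t0 ht0 using hch
  set t : ℕ → ℝ := fun i => if i = 0 then a else if n ≤ i then b else t0 i with ht
  have ht0' : t 0 = a := by simp [ht]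
  have htn : t n = b := by simp [ht, hn0.ne', le_refl]
  have htΔ : ∀ i ≤ n, t i ∈ Δ := by
    intro i hi
    rcases Nat.eq_zero_or_pos i with h0 | h0
    · rw [h0, ht0']; exact ha.2
    rcases eq_or_lt_of_le hi with he | hlt
    · rw [he, htn]; exact hb.2
    · have : t i = t0 i := by simp [ht, h0.ne', not_le.mpr hlt]
      rw [this]; exact (ht0 i ⟨h0, hlt⟩).2
  have htlow : ∀ i ≤ n, a + i * h ≤ t i := by
    intro i hi
    rcases Nat.eq_zero_or_pos i with h0 | h0
    · rw [h0, ht0']; simp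
    rcases eq_or_lt_of_le hi with he | hlt
    · rw [he, htn]; linarith [hnh]
    · have : t i = t0 i := by simp [ht, h0.ne', not_le.mpr hlt]
      rw [this]; exact (ht0 i ⟨h0, hlt⟩).1.1.le
  have hthigh : ∀ i ≤ n, t i ≤ a + i * h + h / 2 := by
    intro i hi
    rcases Nat.eq_zero_or_pos i with h0 | h0
    · rw [h0, ht0']; simp; positivity
    rcases eq_or_lt_of_le hi with he | hlt
    · rw [he, htn]; linarith [hnh]
    · have : t i = t0 i := by simp [ht, h0.ne', not_le.mpr hlt]
      rw [this]; exact (ht0 i ⟨h0, hlt⟩).1.2.le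
  have hgap : ∀ i < n, h / 2 ≤ t (i + 1) - t i := by
    intro i hi
    have h1 := htlow (i + 1) hi
    have h2 := hthigh i (le_of_lt hi)
    push_cast at h1
    linarith
  set s := Real.sqrt (h / 2) with hs
  have hs0 : 0 ≤ s := Real.sqrt_nonneg _
  have hs2 : s ^ 2 = h / 2 := Real.sq_sqrt (by positivity)
  have hterm : ∀ i ∈ Finset.range n, s ≤ f (t i) - f (t (i + 1)) := by
    intro i hi
    rw [Finset.mem_range] at hi
    have hlt : t i < t (i + 1) := by have := hgap i hi; linarith [hhpos]
    refine le_trans ?_ (hkey (t i) (htΔ i (le_of_lt hi)) (t (i + 1)) (htΔ (i + 1) hi) hlt)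
    exact Real.sqrt_le_sqrt (hgap i hi)
  have hsum : (n : ℝ) * s ≤ D := by
    have h1 : ∑ _i ∈ Finset.range n, s ≤ ∑ i ∈ Finset.range n, (f (t i) - f (t (i + 1))) :=
      Finset.sum_le_sum hterm
    rw [Finset.sum_const, Finset.card_range, nsmul_eq_mul] at h1
    rw [Finset.sum_range_sub' (fun i => f (t i)), ht0', htn] at h1
    exact h1
  have hsq : ((n : ℝ) * s) ^ 2 ≤ D ^ 2 :=
    pow_le_pow_left₀ (by positivity) hsum 2
  have e1 : ((n : ℝ) * s) ^ 2 = (n : ℝ) * (b - a) / 2 := by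
    have : ((n : ℝ) * s) ^ 2 = (n : ℝ) ^ 2 * s ^ 2 := by ring
    rw [this, hs2, hh]
    field_simp
  linarith [hsq, e1, hq]

theorem optimal_not_stronglyCMonotone_example :
    let μ : Measure ℝ := volume.restrict (Icc (0 : ℝ) 1)
    let π : Measure (ℝ × ℝ) := μ.map (fun x => (x, x))
    IsCoupling μ μ π ∧ (∫⁻ p, exCost p ∂π ≠ ⊤) ∧
    (∀ π' : Measure (ℝ × ℝ), IsCoupling μ μ π' → ∫⁻ p, exCost p ∂π' ≠ ⊤ → π' = π) ∧
    ¬ ∃ (φ ψ : ℝ → EReal), Measurable φ ∧ Measurable ψ ∧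
        (∀ x, φ x ≠ ⊤) ∧ (∀ y, ψ y ≠ ⊤) ∧
        (∀ x ∈ Icc (0 : ℝ) 1, ∀ y ∈ Icc (0 : ℝ) 1,
          φ x + ψ y ≤ (exCost (x, y)).toEReal) ∧
        (∀ᵐ x ∂μ, φ x + ψ x = (1 : EReal)) := by
  intro μ π
  have hdiag : Measurable (fun x : ℝ => (x, x)) := measurable_id.prodMk measurable_id
  have hμc : μ (Icc (0:ℝ) 1)ᶜ = 0 := by
    rw [Measure.restrict_apply measurableSet_Icc.compl]; simp
  refine ⟨⟨?_, ?_⟩, ?_, ?_, ?_⟩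
  · rw [Measure.map_map measurable_fst hdiag]
    have : (Prod.fst ∘ fun x : ℝ => (x, x)) = id := rfl
    rw [this, Measure.map_id]
  · rw [Measure.map_map measurable_snd hdiag]
    have : (Prod.snd ∘ fun x : ℝ => (x, x)) = id := rfl
    rw [this, Measure.map_id]
  · rw [lintegral_map exCost_meas hdiag]
    simp only [exCost_diag]
    simp [μ]
  · rintro π' ⟨h1, h2⟩ hfin
    have hae2 : ∀ᵐ p ∂π', p.2 ∈ Icc (0:ℝ) 1 := by
      have h := Measure.map_apply (μ := π') measurable_snd
        (measurableSet_Icc (a := (0:ℝ)) (b := 1)).compl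
      rw [h2, hμc] at h
      exact (measure_eq_zero_iff_ae_notMem.mp h.symm).mono (fun p hp => not_not.mp hp)
    have hmeaslt : MeasurableSet {p : ℝ × ℝ | p.1 < p.2} :=
      measurableSet_lt measurable_fst measurable_snd
    have haele : ∀ᵐ p ∂π', p.2 ≤ p.1 := by
      have hz : π' {p : ℝ × ℝ | p.1 < p.2} = 0 := by
        by_contra hne
        apply hfin
        have hge : ∫⁻ p in {p : ℝ × ℝ | p.1 < p.2}, exCost p ∂π' ≤ ∫⁻ p, exCost p ∂π' :=
          setLIntegral_le_lintegral _ _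
        have heq : ∫⁻ p in {p : ℝ × ℝ | p.1 < p.2}, exCost p ∂π' = ⊤ := by
          have hc : ∫⁻ p in {p : ℝ × ℝ | p.1 < p.2}, exCost p ∂π'
              = ∫⁻ _ in {p : ℝ × ℝ | p.1 < p.2}, ⊤ ∂π' :=
            setLIntegral_congr_fun hmeaslt ((fun p hp => by
              have hlt : p.1 < p.2 := hp
              simp only [exCost, if_neg (not_le.mpr hlt)]))
          rw [hc, lintegral_const, Measure.restrict_apply_univ]
          simp [hne]
        exact top_le_iff.mp (heq ▸ hge)
      exact (measure_eq_zero_iff_ae_notMem.mp hz).mono (fun p hp => not_lt.mp hp)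
    have hI1 : ∫⁻ p, ENNReal.ofReal p.1 ∂π' = ∫⁻ x, ENNReal.ofReal x ∂μ := by
      rw [← h1, lintegral_map ENNReal.measurable_ofReal measurable_fst]
    have hI2 : ∫⁻ p, ENNReal.ofReal p.2 ∂π' = ∫⁻ x, ENNReal.ofReal x ∂μ := by
      rw [← h2, lintegral_map ENNReal.measurable_ofReal measurable_snd]
    have hIfin : ∫⁻ x, ENNReal.ofReal x ∂μ ≠ ⊤ := by
      have hle : ∫⁻ x, ENNReal.ofReal x ∂μ ≤ ∫⁻ _, 1 ∂μ := by
        refine lintegral_mono_ae ?_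
        filter_upwards [ae_restrict_mem measurableSet_Icc] with x hx
        exact ENNReal.ofReal_le_one.mpr hx.2
      refine ne_top_of_le_ne_top ?_ hle
      simp [μ]
    have haddae : ∀ᵐ p ∂π',
        ENNReal.ofReal p.1 = ENNReal.ofReal p.2 + ENNReal.ofReal (p.1 - p.2) := by
      filter_upwards [hae2, haele] with p hp2 hle
      rw [← ENNReal.ofReal_add hp2.1 (sub_nonneg.mpr hle)]
      ring_nf
    have hdiff0 : ∫⁻ p, ENNReal.ofReal (p.1 - p.2) ∂π' = 0 := by
      have hsum : ∫⁻ p, ENNReal.ofReal p.1 ∂π'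
          = ∫⁻ p, ENNReal.ofReal p.2 ∂π' + ∫⁻ p, ENNReal.ofReal (p.1 - p.2) ∂π' := by
        rw [← lintegral_add_left measurable_snd.ennreal_ofReal]
        exact lintegral_congr_ae haddae
      rw [hI1, hI2] at hsum
      have := (ENNReal.add_right_inj hIfin).mp (by rw [← hsum, add_zero] :
        ∫⁻ x, ENNReal.ofReal x ∂μ + 0
          = ∫⁻ x, ENNReal.ofReal x ∂μ + ∫⁻ p, ENNReal.ofReal (p.1 - p.2) ∂π')
      exact this.symm
    have haeeq : ∀ᵐ p ∂π', p.2 = p.1 := by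
      have h0 := (lintegral_eq_zero_iff
        (ENNReal.measurable_ofReal.comp (measurable_fst.sub measurable_snd))).mp hdiff0
      filter_upwards [h0, haele] with p hp hle
      have : p.1 - p.2 ≤ 0 := ENNReal.ofReal_eq_zero.mp hp
      linarith
    ext A hA
    have hset : A =ᵐ[π'] ((fun p : ℝ × ℝ => (p.1, p.1)) ⁻¹' A) := by
      refine Filter.eventuallyEq_set.mpr ?_
      filter_upwards [haeeq] with p hp
      have hpe : ((p.1 : ℝ), p.1) = p := Prod.ext rfl hp.symm
      rw [Set.mem_preimage, hpe]
    calc π' A = π' ((fun p : ℝ × ℝ => (p.1, p.1)) ⁻¹' A) := measure_congr hset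
      _ = π'.map (fun p : ℝ × ℝ => (p.1, p.1)) A :=
          (Measure.map_apply (hdiag.comp measurable_fst) hA).symm
      _ = (π'.map Prod.fst).map (fun x : ℝ => (x, x)) A := by
          rw [Measure.map_map hdiag measurable_fst]; rfl
      _ = μ.map (fun x : ℝ => (x, x)) A := by rw [h1]
  · rintro ⟨φ, ψ, _hφm, _hψm, hφ, hψ, hle, hae⟩
    set B : Set ℝ := {x | ¬ (φ x + ψ x = 1)} with hB
    have hB0 : volume (B ∩ Icc (0:ℝ) 1) = 0 := by
      have := ae_iff.mp hae
      rwa [Measure.restrict_apply' measurableSet_Icc] at this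
    set Δ : Set ℝ := {x | x ∈ Icc (0:ℝ) 1 ∧ φ x + ψ x = 1} with hΔ
    have hne : ∀ l r : ℝ, 0 ≤ l → l < r → r ≤ 1 → (Ioo l r ∩ Δ).Nonempty := by
      intro l r h0 hlr hr1
      refine aux_dense Δ B hB0 ?_ l r hlr ?_
      · intro x hx hxB
        exact ⟨hx, not_not.mp hxB⟩
      · intro y hy
        exact ⟨le_trans h0 hy.1.le, le_trans hy.2.le hr1⟩
    have hkey : ∀ x ∈ Δ, ∀ x' ∈ Δ, x < x' →
        Real.sqrt (x' - x) ≤ (φ x).toReal - (φ x').toReal := by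
      intro x hx x' hx' hlt
      exact aux_key φ ψ hφ hψ hle x x' hx.1 hx'.1 hx.2 hx'.2 hlt
    exact aux_false Δ (fun x => (φ x).toReal) hne hkey
end
end
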